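/- The function u(x,t) = √(2λ) cos((x-λt)/2) satisfies the general KdV equation u_t + (u³)_x + (u·(u²)_{xx})_x = 0 at every point (x,t) with |x-λt| < π. -/

import Mathlib

open Real

/-- The compacton `u(x,t) = √(2λ) cos((x-λt)/2)` satisfies the general KdV
equation `u_t + (u³)_x + (u·(u²)_{xx})_x = 0` wherever `|x - λt| < π`. -/
theorem stmt_0 (l : ℝ) (hl : 0 < l)
    (u : ℝ → ℝ → ℝ)
    (hu : ∀ x t, u x t = Real.sqrt (2 * l) * Real.cos ((x - l * t) / 2)) :
    ∀ x t : ℝ, |x - l * t| < Real.pi →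
      deriv (fun τ => u x τ) t
        + deriv (fun y => (u y t) ^ 3) x
        + deriv (fun y => u y t *
            deriv (fun z => deriv (fun w => (u w t) ^ 2) z) y) x = 0 := by
  intro x t _h
  have hc : Real.sqrt (2 * l) ^ 2 = 2 * l := Real.sq_sqrt (by linarith)
  set c := Real.sqrt (2 * l) with hcdef
  -- spatial derivative of u
  have hxarg : ∀ y : ℝ, HasDerivAt (fun w : ℝ => (w - l * t) / 2) (1 / 2) y := by
    intro y
    simpa using ((hasDerivAt_id y).sub_const (l * t)).div_const 2
  have hU : ∀ y : ℝ, HasDerivAt (fun w => u w t)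
      (-(c * Real.sin ((y - l * t) / 2)) / 2) y := by
    intro y
    have h := (((Real.hasDerivAt_cos ((y - l * t) / 2)).comp y (hxarg y)).const_mul c)
    simp only [hu]
    exact h.congr_deriv (by ring)
  -- first derivative of u^2 in space
  have hUsq : ∀ z : ℝ, deriv (fun w => (u w t) ^ 2) z = -l * Real.sin (z - l * t) := by
    intro z
    have h := ((hU z).fun_pow 2).deriv
    rw [h, hu]
    set s := Real.sin ((z - l * t) / 2) with hs
    set co := Real.cos ((z - l * t) / 2) with hco
    have hsin : Real.sin (z - l * t) = 2 * s * co := by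
      rw [hs, hco, ← Real.sin_two_mul]; ring_nf
    rw [hsin]
    linear_combination (-(s * co)) * hc
  -- time derivative
  have hT : HasDerivAt (fun τ => u x τ)
      (c * Real.sin ((x - l * t) / 2) * (l / 2)) t := by
    have harg : HasDerivAt (fun τ : ℝ => (x - l * τ) / 2) (-l / 2) t := by
      simpa using (((hasDerivAt_const t x).sub ((hasDerivAt_id t).const_mul l)).div_const 2)
    have h := ((Real.hasDerivAt_cos ((x - l * t) / 2)).comp t harg).const_mul c
    simp only [hu]
    exact h.congr_deriv (by ring)
  -- cube derivative
  have hCube : HasDerivAt (fun y => (u y t) ^ 3)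
      (3 * (c * Real.cos ((x - l * t) / 2)) ^ 2
        * (-(c * Real.sin ((x - l * t) / 2)) / 2)) x := by
    have h := (hU x).fun_pow 3
    simpa [hu] using h
  -- third term
  have hinner : (fun z => deriv (fun w => (u w t) ^ 2) z)
      = fun z => -l * Real.sin (z - l * t) := funext hUsq
  have hthird : (fun y => u y t * deriv (fun z => deriv (fun w => (u w t) ^ 2) z) y)
      = fun y => u y t * (-l * Real.cos (y - l * t)) := by
    funext y
    congr 1
    rw [hinner]
    have h := ((Real.hasDerivAt_sin (y - l * t)).comp y
      ((hasDerivAt_id y).sub_const (l * t))).const_mul (-l)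
    simpa using h.deriv
  have hG : HasDerivAt (fun y => u y t * (-l * Real.cos (y - l * t)))
      ((-(c * Real.sin ((x - l * t) / 2)) / 2) * (-l * Real.cos (x - l * t))
        + u x t * (-l * -Real.sin (x - l * t))) x := by
    have h2 : HasDerivAt (fun y : ℝ => -l * Real.cos (y - l * t))
        (-l * -Real.sin (x - l * t)) x := by
      have := ((Real.hasDerivAt_cos (x - l * t)).comp x
        ((hasDerivAt_id x).sub_const (l * t))).const_mul (-l)
      simpa using this
    exact (hU x).mul h2
  rw [hT.deriv, hCube.deriv, hthird, hG.deriv]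
  simp only [hu]
  set s := Real.sin ((x - l * t) / 2) with hs
  set co := Real.cos ((x - l * t) / 2) with hco
  have hsin : Real.sin (x - l * t) = 2 * s * co := by
    rw [hs, hco, ← Real.sin_two_mul]; ring_nf
  have hcos : Real.cos (x - l * t) = 2 * co ^ 2 - 1 := by
    rw [hco, ← Real.cos_two_mul]; ring_nf
  rw [hsin, hcos]
  linear_combination (-(3 / 2) * c * co ^ 2 * s) * hc
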